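/- Let W = W₁ ⊕ ⋯ ⊕ W_j and W' = W'₁ ⊕ ⋯ ⊕ W'_{j'} be block-diagonal matrix weights whose diagonal blocks W_i and W'_k are irreducible matrix weights. If W and W' are unitarily equivalent, then j = j' and there exists a permutation σ of {1, …, j} such that W_i is unitarily equivalent to W'_{σ(i)} for all 1 ≤ i ≤ j. -/

import Mathlib

open MeasureTheory Matrix
open scoped ComplexOrder

noncomputable section

/-- The set of real points strictly between the extended-real endpoints `a` and `b`. -/
def weightSupport (a b : EReal) : Set ℝ := {x : ℝ | a < (x : EReal) ∧ (x : EReal) < b}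

variable {I : Type} [Fintype I] [DecidableEq I]
variable {I' : Type} [Fintype I'] [DecidableEq I']

/-- Entrywise integral of a matrix-valued function over a set. -/
def matIntegral (S : Set ℝ) (F : ℝ → Matrix I I ℂ) : Matrix I I ℂ :=
  Matrix.of fun i j => ∫ x in S, F x i j

/-- `W` is a matrix weight on the (nondegenerate) interval `(a,b)`. -/
def IsMatrixWeight (a b : EReal) (W : ℝ → Matrix I I ℂ) : Prop :=
  a < b ∧
  (∀ x ∈ weightSupport a b, (W x).PosSemidef) ∧
  (∀ᵐ x : ℝ ∂(volume.restrict (weightSupport a b)), (W x).PosDef) ∧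
  (∀ n : ℕ, ∀ i j, IntegrableOn (fun x : ℝ => (x : ℂ) ^ n * W x i j) (weightSupport a b))

/-- Equivalence of matrix weights: `W' = M W M*` for a nonsingular `M`. -/
def WeightEquiv (a b : EReal) (W : ℝ → Matrix I I ℂ) (W' : ℝ → Matrix I' I' ℂ) : Prop :=
  ∃ (M : Matrix I' I ℂ) (M' : Matrix I I' ℂ), M * M' = 1 ∧ M' * M = 1 ∧
    ∀ x ∈ weightSupport a b, W' x = M * W x * Mᴴ

/-- Unitary equivalence of matrix weights. -/
def UnitaryWeightEquiv (a b : EReal) (W : ℝ → Matrix I I ℂ) (W' : ℝ → Matrix I' I' ℂ) : Prop :=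
  ∃ M : Matrix I' I ℂ, M * Mᴴ = 1 ∧ Mᴴ * M = 1 ∧
    ∀ x ∈ weightSupport a b, W' x = M * W x * Mᴴ

/-- `W` reduces: it is equivalent to a direct sum of two matrix weights of smaller size. -/
def Reduces (a b : EReal) (W : ℝ → Matrix I I ℂ) : Prop :=
  ∃ (N₁ N₂ : ℕ) (W₁ : ℝ → Matrix (Fin N₁) (Fin N₁) ℂ) (W₂ : ℝ → Matrix (Fin N₂) (Fin N₂) ℂ),
    0 < N₁ ∧ 0 < N₂ ∧ N₁ + N₂ = Fintype.card I ∧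
    IsMatrixWeight a b W₁ ∧ IsMatrixWeight a b W₂ ∧
    WeightEquiv a b W (fun x => Matrix.fromBlocks (W₁ x) 0 0 (W₂ x))

/-- The real vector space `C_ℝ` of a matrix weight. -/
def CR (a b : EReal) (W : ℝ → Matrix I I ℂ) : Set (Matrix I I ℂ) :=
  {T | ∀ᵐ x ∂(volume.restrict (weightSupport a b)), T * W x = W x * Tᴴ}

/-- Evaluation of a matrix polynomial at a real point. -/
def polyEval (p : Polynomial (Matrix I I ℂ)) (x : ℝ) : Matrix I I ℂ :=
  p.eval ((x : ℂ) • (1 : Matrix I I ℂ))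

/-- A sequence of orthogonal polynomials with respect to `W`:  `Q n` has degree `n` with
nonsingular leading coefficient, and distinct members are orthogonal. -/
def IsOPS (a b : EReal) (W : ℝ → Matrix I I ℂ) (Q : ℕ → Polynomial (Matrix I I ℂ)) : Prop :=
  (∀ n, (Q n).natDegree = n ∧ IsUnit ((Q n).coeff n)) ∧
  ∀ n m, n ≠ m →
    matIntegral (weightSupport a b) (fun x => polyEval (Q n) x * W x * (polyEval (Q m) x)ᴴ) = 0

/-- The sequence of monic orthogonal polynomials with respect to `W`. -/
def IsMonicOPS (a b : EReal) (W : ℝ → Matrix I I ℂ) (P : ℕ → Polynomial (Matrix I I ℂ)) : Prop :=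
  (∀ n, (P n).Monic ∧ (P n).natDegree = n) ∧
  ∀ n m, n ≠ m →
    matIntegral (weightSupport a b) (fun x => polyEval (P n) x * W x * (polyEval (P m) x)ᴴ) = 0

end


section Helpers


lemma posDef_conj_unitary {n : Type} [Fintype n] [DecidableEq n] {M V : Matrix n n ℂ}
    (hM : M.PosDef) (hV : Vᴴ * V = 1) : (Vᴴ * M * V).PosDef := by
  refine posDef_iff_dotProduct_mulVec.mpr ⟨?_, ?_⟩
  · show (Vᴴ * M * V)ᴴ = Vᴴ * M * V
    simp [conjTranspose_mul, mul_assoc, hM.isHermitian.eq]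
  · intro u hu
    have hVu : V *ᵥ u ≠ 0 := by
      intro h
      apply hu
      have : Vᴴ *ᵥ (V *ᵥ u) = (Vᴴ * V) *ᵥ u := mulVec_mulVec u Vᴴ V
      rw [h, mulVec_zero, hV, one_mulVec] at this
      exact this.symm
    have key : star u ⬝ᵥ ((Vᴴ * M * V) *ᵥ u) = star (V *ᵥ u) ⬝ᵥ (M *ᵥ (V *ᵥ u)) := by
      rw [star_mulVec, ← mulVec_mulVec, ← mulVec_mulVec, dotProduct_mulVec]
    rw [key]
    exact hM.dotProduct_mulVec_pos hVu

lemma posDef_submatrix_equiv {m n : Type} [Fintype m] [Fintype n] [DecidableEq m] [DecidableEq n]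
    {M : Matrix n n ℂ} (hM : M.PosDef) (e : m ≃ n) : (M.submatrix e e).PosDef := by
  refine posDef_iff_dotProduct_mulVec.mpr ⟨hM.isHermitian.submatrix e, fun u hu => ?_⟩
  have hu' : u ∘ e.symm ≠ 0 := by
    intro h
    apply hu
    funext i
    have := congrFun h (e i)
    simpa using this
  have h1 : M.submatrix e e *ᵥ u = (M *ᵥ (u ∘ e.symm)) ∘ e := submatrix_mulVec_equiv M u e e
  have h2 : star u ⬝ᵥ (M.submatrix e e *ᵥ u) = star (u ∘ e.symm) ⬝ᵥ (M *ᵥ (u ∘ e.symm)) := by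
    rw [h1]
    simp only [dotProduct, Function.comp_apply]
    exact Fintype.sum_equiv e _ _ (fun i => by simp [Pi.star_apply])
  rw [h2]
  exact hM.dotProduct_mulVec_pos hu'

lemma posDef_toBlocks₁₁ {m n : Type} [Fintype m] [Fintype n] [DecidableEq m] [DecidableEq n]
    {M : Matrix (m ⊕ n) (m ⊕ n) ℂ} (hM : M.PosDef) : M.toBlocks₁₁.PosDef := by
  refine posDef_iff_dotProduct_mulVec.mpr ⟨hM.isHermitian.submatrix Sum.inl, fun y hy => ?_⟩
  set u : m ⊕ n → ℂ := Sum.elim y 0 with hu_def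
  have hu : u ≠ 0 := by
    intro h
    apply hy
    funext i
    exact congrFun h (Sum.inl i)
  have key : star y ⬝ᵥ (M.toBlocks₁₁ *ᵥ y) = star u ⬝ᵥ (M *ᵥ u) := by
    simp only [dotProduct, mulVec, Fintype.sum_sum_type, hu_def]
    simp [dotProduct, toBlocks₁₁, Matrix.mul_apply]
  rw [key]
  exact hM.dotProduct_mulVec_pos hu

lemma posDef_toBlocks₂₂ {m n : Type} [Fintype m] [Fintype n] [DecidableEq m] [DecidableEq n]
    {M : Matrix (m ⊕ n) (m ⊕ n) ℂ} (hM : M.PosDef) : M.toBlocks₂₂.PosDef := by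
  refine posDef_iff_dotProduct_mulVec.mpr ⟨hM.isHermitian.submatrix Sum.inr, fun y hy => ?_⟩
  set u : m ⊕ n → ℂ := Sum.elim 0 y with hu_def
  have hu : u ≠ 0 := by
    intro h
    apply hy
    funext i
    exact congrFun h (Sum.inr i)
  have key : star y ⬝ᵥ (M.toBlocks₂₂ *ᵥ y) = star u ⬝ᵥ (M *ᵥ u) := by
    simp only [dotProduct, mulVec, Fintype.sum_sum_type, hu_def]
    simp [dotProduct, toBlocks₂₂, Matrix.mul_apply]
  rw [key]
  exact hM.dotProduct_mulVec_pos hu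


lemma integrable_conj_entry {N : Type} [Fintype N] [DecidableEq N] {a b : EReal}
    {W : ℝ → Matrix N N ℂ} (hW : IsMatrixWeight a b W) (V : Matrix N N ℂ) (m : ℕ) (i j : N) :
    IntegrableOn (fun x : ℝ => (x : ℂ) ^ m * (Vᴴ * W x * V) i j) (weightSupport a b) := by
  have heq : (fun x : ℝ => (x : ℂ) ^ m * (Vᴴ * W x * V) i j)
      = fun x : ℝ => ∑ l, ∑ k, (star (V k i) * V l j) * ((x : ℂ) ^ m * W x k l) := by
    funext x
    simp only [Matrix.mul_apply, conjTranspose_apply, Finset.sum_mul, Finset.mul_sum]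
    refine Finset.sum_congr rfl fun l _ => Finset.sum_congr rfl fun k _ => ?_
    ring
  rw [heq]
  exact integrable_finset_sum _ fun l _ =>
    integrable_finset_sum _ fun k _ => ((hW.2.2.2 m k l).const_mul _)

lemma commutant_scalar {N : ℕ} {a b : EReal} {W : ℝ → Matrix (Fin N) (Fin N) ℂ}
    (hW : IsMatrixWeight a b W) (hirr : ¬ Reduces a b W)
    {S : Matrix (Fin N) (Fin N) ℂ} (hS : S.IsHermitian)
    (hcomm : ∀ x ∈ weightSupport a b, S * W x = W x * S) :
    ∃ c : ℝ, S = (c : ℂ) • (1 : Matrix (Fin N) (Fin N) ℂ) := by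
  classical
  rcases Nat.eq_zero_or_pos N with hN | hN
  · subst hN
    exact ⟨0, by ext i; exact i.elim0⟩
  -- spectral decomposition with sorted eigenvalues
  set V₀ : Matrix (Fin N) (Fin N) ℂ := (hS.eigenvectorUnitary : Matrix (Fin N) (Fin N) ℂ) with hV₀def
  have hV₀mem := hS.eigenvectorUnitary.property
  have hV₀1 : V₀ᴴ * V₀ = 1 := by
    have := mem_unitaryGroup_iff'.mp hV₀mem
    simpa [Matrix.star_eq_conjTranspose] using this
  have hV₀2 : V₀ * V₀ᴴ = 1 := by
    have := mem_unitaryGroup_iff.mp hV₀mem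
    simpa [Matrix.star_eq_conjTranspose] using this
  set σ : Equiv.Perm (Fin N) := Tuple.sort hS.eigenvalues with hσdef
  set d : Fin N → ℝ := hS.eigenvalues ∘ σ with hddef
  have hd : Monotone d := Tuple.monotone_sort _
  set dC : Fin N → ℂ := fun i => (d i : ℂ) with hdCdef
  set V : Matrix (Fin N) (Fin N) ℂ := V₀.submatrix id σ with hVdef
  have hVH : Vᴴ = V₀ᴴ.submatrix (⇑σ) id := by
    rw [hVdef, conjTranspose_submatrix]
  have hV1 : Vᴴ * V = 1 := by
    rw [hVH, hVdef]
    have h := submatrix_mul_equiv V₀ᴴ V₀ (⇑σ) (Equiv.refl (Fin N)) (⇑σ)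
    rw [Equiv.coe_refl] at h
    rw [h, hV₀1, submatrix_one_equiv σ]
  have hV2 : V * Vᴴ = 1 := by
    rw [hVH, hVdef]
    have h := submatrix_mul_equiv V₀ V₀ᴴ id σ id
    rw [h, hV₀2, submatrix_id_id]
  have hspec : S = V * Matrix.diagonal dC * Vᴴ := by
    have h0 := hS.spectral_theorem
    have hdiag : (Matrix.diagonal (RCLike.ofReal ∘ hS.eigenvalues)).submatrix (⇑σ) (⇑σ)
        = Matrix.diagonal dC := by
      rw [Matrix.submatrix_diagonal _ _ σ.injective]
      rfl
    have h1 : V * Matrix.diagonal dC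
        = (V₀ * Matrix.diagonal (RCLike.ofReal ∘ hS.eigenvalues)).submatrix id (⇑σ) := by
      rw [← hdiag, hVdef]
      exact submatrix_mul_equiv V₀ _ id σ (⇑σ)
    have h2 : V * Matrix.diagonal dC * Vᴴ
        = (V₀ * Matrix.diagonal (RCLike.ofReal ∘ hS.eigenvalues) * V₀ᴴ).submatrix id id := by
      rw [h1, hVH]
      exact submatrix_mul_equiv _ V₀ᴴ id σ id
    rw [h2, submatrix_id_id]
    exact h0
  by_cases hconst : ∀ i, d i = d ⟨0, hN⟩
  · refine ⟨d ⟨0, hN⟩, ?_⟩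
    have hdg : Matrix.diagonal dC = ((d ⟨0, hN⟩ : ℝ) : ℂ) • (1 : Matrix (Fin N) (Fin N) ℂ) := by
      have hceq : dC = fun _ : Fin N => ((d ⟨0, hN⟩ : ℝ) : ℂ) := by
        funext i
        simp [hdCdef, hconst i]
      rw [hceq, smul_one_eq_diagonal]
    rw [hspec, hdg, Matrix.mul_smul, Matrix.smul_mul, mul_one, hV2]
  · -- build a reduction, contradiction
    exfalso
    push_neg at hconst
    obtain ⟨i₀, hi₀⟩ := hconst
    have hd0le : ∀ i, d ⟨0, hN⟩ ≤ d i := fun i => hd (Fin.le_def.mpr (Nat.zero_le _))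
    have hex : ∃ m : ℕ, ∃ hm : m < N, d ⟨m, hm⟩ ≠ d ⟨0, hN⟩ := ⟨i₀.1, i₀.2, by simpa using hi₀⟩
    set N₁ : ℕ := Nat.find hex with hN₁def
    obtain ⟨hN₁lt, hdN₁⟩ := Nat.find_spec hex
    have hmin : ∀ m (hm : m < N), m < N₁ → d ⟨m, hm⟩ = d ⟨0, hN⟩ := by
      intro m hm hmlt
      by_contra hne
      exact Nat.find_min hex hmlt ⟨hm, hne⟩
    have hN₁pos : 0 < N₁ := by
      rcases Nat.eq_zero_or_pos N₁ with h0 | h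
      · exfalso
        apply hdN₁
        exact congrArg d (Fin.ext (show N₁ = 0 from h0))
      · exact h
    set N₂ : ℕ := N - N₁ with hN₂def
    have hNN : N₁ + N₂ = N := by omega
    have hN₂pos : 0 < N₂ := by omega
    set e : Fin N₁ ⊕ Fin N₂ ≃ Fin N := finSumFinEquiv.trans (finCongr hNN) with hedef
    have he_inl : ∀ p : Fin N₁, (e (Sum.inl p) : ℕ) = (p : ℕ) := by
      intro p; simp [hedef]
    have he_inr : ∀ q : Fin N₂, (e (Sum.inr q) : ℕ) = N₁ + (q : ℕ) := by
      intro q; simp [hedef]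
    have hdl : ∀ p : Fin N₁, d (e (Sum.inl p)) = d ⟨0, hN⟩ := by
      intro p
      have h1 : ((e (Sum.inl p)) : ℕ) < N₁ := by rw [he_inl]; exact p.2
      have := hmin (e (Sum.inl p)) (e (Sum.inl p)).2 h1
      simpa using this
    have hdr : ∀ q : Fin N₂, d ⟨0, hN⟩ < d (e (Sum.inr q)) := by
      intro q
      have h1 : d ⟨0, hN⟩ < d ⟨N₁, hN₁lt⟩ := lt_of_le_of_ne (hd0le _) (Ne.symm hdN₁)
      have h2 : d ⟨N₁, hN₁lt⟩ ≤ d (e (Sum.inr q)) := by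
        apply hd
        rw [Fin.le_def, he_inr]
        exact Nat.le_add_right _ _
      exact lt_of_lt_of_le h1 h2
    -- conjugated weight
    set A : ℝ → Matrix (Fin N) (Fin N) ℂ := fun x => Vᴴ * W x * V with hAdef
    have hVS : Vᴴ * S = Matrix.diagonal dC * Vᴴ := by
      rw [hspec]
      calc Vᴴ * (V * Matrix.diagonal dC * Vᴴ) = (Vᴴ * V) * Matrix.diagonal dC * Vᴴ := by
            simp only [mul_assoc]
        _ = Matrix.diagonal dC * Vᴴ := by rw [hV1, one_mul]
    have hSV : S * V = V * Matrix.diagonal dC := by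
      rw [hspec]
      calc V * Matrix.diagonal dC * Vᴴ * V = V * Matrix.diagonal dC * (Vᴴ * V) := by
            simp only [mul_assoc]
        _ = V * Matrix.diagonal dC := by rw [hV1, mul_one]
    have hAcomm : ∀ x ∈ weightSupport a b,
        Matrix.diagonal dC * A x = A x * Matrix.diagonal dC := by
      intro x hx
      calc Matrix.diagonal dC * A x = (Matrix.diagonal dC * Vᴴ) * W x * V := by
            simp only [hAdef, mul_assoc]
        _ = (Vᴴ * S) * W x * V := by rw [hVS]
        _ = Vᴴ * (S * W x) * V := by simp only [mul_assoc]
        _ = Vᴴ * (W x * S) * V := by rw [hcomm x hx]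
        _ = Vᴴ * W x * (S * V) := by simp only [mul_assoc]
        _ = Vᴴ * W x * (V * Matrix.diagonal dC) := by rw [hSV]
        _ = A x * Matrix.diagonal dC := by simp only [hAdef, mul_assoc]
    have hcross : ∀ x ∈ weightSupport a b, ∀ i j, d i ≠ d j → A x i j = 0 := by
      intro x hx i j hij
      have h := congrFun (congrFun (hAcomm x hx) i) j
      have h' : dC i * A x i j = A x i j * dC j := by
        rw [← Matrix.diagonal_mul, ← Matrix.mul_diagonal]
        exact h
      have hne : dC i ≠ dC j := by
        simp only [hdCdef]
        exact_mod_cast hij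
      have : (dC i - dC j) * A x i j = 0 := by
        rw [sub_mul, h', mul_comm]
        ring
      rcases mul_eq_zero.mp this with h0 | h0
      · exact absurd (sub_eq_zero.mp h0) hne
      · exact h0
    set Wb : ℝ → Matrix (Fin N₁ ⊕ Fin N₂) (Fin N₁ ⊕ Fin N₂) ℂ :=
      fun x => (A x).submatrix e e with hWbdef
    have hBpsd : ∀ x ∈ weightSupport a b, (Wb x).PosSemidef := by
      intro x hx
      have h1 := (hW.2.1 x hx).mul_mul_conjTranspose_same Vᴴ
      rw [conjTranspose_conjTranspose] at h1
      exact h1.submatrix e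
    have hBpd : ∀ᵐ x ∂(volume.restrict (weightSupport a b)), (Wb x).PosDef := by
      filter_upwards [hW.2.2.1] with x hx
      exact posDef_submatrix_equiv (posDef_conj_unitary hx hV1) e
    have hBint : ∀ (m : ℕ) (i j : Fin N₁ ⊕ Fin N₂),
        IntegrableOn (fun x : ℝ => (x : ℂ) ^ m * Wb x i j) (weightSupport a b) :=
      fun m i j => integrable_conj_entry hW V m (e i) (e j)
    have hB12 : ∀ x ∈ weightSupport a b, (Wb x).toBlocks₁₂ = 0 := by
      intro x hx
      ext p q
      exact hcross x hx _ _ (ne_of_lt (by rw [hdl p]; exact hdr q))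
    have hB21 : ∀ x ∈ weightSupport a b, (Wb x).toBlocks₂₁ = 0 := by
      intro x hx
      ext q p
      exact hcross x hx _ _ (ne_of_gt (by rw [hdl p]; exact hdr q))
    set Wbl : ℝ → Matrix (Fin N₁) (Fin N₁) ℂ := fun x => (Wb x).toBlocks₁₁ with hWbldef
    set Wbr : ℝ → Matrix (Fin N₂) (Fin N₂) ℂ := fun x => (Wb x).toBlocks₂₂ with hWbrdef
    have hw1 : IsMatrixWeight a b Wbl := by
      refine ⟨hW.1, fun x hx => (hBpsd x hx).submatrix Sum.inl, ?_, ?_⟩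
      · filter_upwards [hBpd] with x hx
        exact posDef_toBlocks₁₁ hx
      · intro m p q
        exact hBint m (Sum.inl p) (Sum.inl q)
    have hw2 : IsMatrixWeight a b Wbr := by
      refine ⟨hW.1, fun x hx => (hBpsd x hx).submatrix Sum.inr, ?_, ?_⟩
      · filter_upwards [hBpd] with x hx
        exact posDef_toBlocks₂₂ hx
      · intro m p q
        exact hBint m (Sum.inr p) (Sum.inr q)
    apply hirr
    refine ⟨N₁, N₂, Wbl, Wbr, hN₁pos, hN₂pos, by simp [hNN], hw1, hw2, ?_⟩
    refine ⟨Vᴴ.submatrix (⇑e) id, V.submatrix id (⇑e), ?_, ?_, ?_⟩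
    · have h := submatrix_mul_equiv Vᴴ V (⇑e) (Equiv.refl (Fin N)) (⇑e)
      rw [Equiv.coe_refl] at h
      rw [h, hV1, submatrix_one_equiv e]
    · have h := submatrix_mul_equiv V Vᴴ id e id
      rw [h, hV2, submatrix_id_id]
    · intro x hx
      have hMH : (Vᴴ.submatrix (⇑e) id)ᴴ = V.submatrix id (⇑e) := by
        rw [conjTranspose_submatrix, conjTranspose_conjTranspose]
      rw [hMH]
      have h1 : (W x).submatrix id (⇑(Equiv.refl (Fin N))) * V.submatrix (⇑(Equiv.refl (Fin N))) (⇑e)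
          = (W x * V).submatrix id (⇑e) := submatrix_mul_equiv (W x) V id (Equiv.refl (Fin N)) (⇑e)
      rw [Equiv.coe_refl, submatrix_id_id] at h1
      have h2 : Vᴴ.submatrix (⇑e) (⇑(Equiv.refl (Fin N))) * (W x * V).submatrix (⇑(Equiv.refl (Fin N))) (⇑e)
          = (Vᴴ * (W x * V)).submatrix (⇑e) (⇑e) := submatrix_mul_equiv Vᴴ (W x * V) (⇑e) (Equiv.refl (Fin N)) (⇑e)
      rw [Equiv.coe_refl] at h2
      have h3 : Vᴴ.submatrix (⇑e) id * W x * V.submatrix id (⇑e) = Wb x := by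
        rw [Matrix.mul_assoc, h1, h2]
        show (Vᴴ * (W x * V)).submatrix (⇑e) (⇑e) = (Vᴴ * W x * V).submatrix (⇑e) (⇑e)
        rw [mul_assoc]
      rw [h3]
      have h4 := Matrix.fromBlocks_toBlocks (Wb x)
      rw [hB12 x hx, hB21 x hx] at h4
      show Matrix.fromBlocks (Wbl x) 0 0 (Wbr x) = Wb x
      simp only [hWbldef, hWbrdef]
      exact h4


lemma schur_weights {N M : ℕ} (hN : 0 < N) (hM : 0 < M) {a b : EReal}
    {Wa : ℝ → Matrix (Fin N) (Fin N) ℂ} {Wb : ℝ → Matrix (Fin M) (Fin M) ℂ}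
    (hWa : IsMatrixWeight a b Wa) (hWb : IsMatrixWeight a b Wb)
    (hira : ¬ Reduces a b Wa) (hirb : ¬ Reduces a b Wb)
    {T : Matrix (Fin M) (Fin N) ℂ}
    (hT : ∀ x ∈ weightSupport a b, Wb x * T = T * Wa x) :
    ∃ lam : ℝ, 0 ≤ lam ∧ Tᴴ * T = (lam : ℂ) • 1 ∧ T * Tᴴ = (lam : ℂ) • 1 ∧
      (lam ≠ 0 → UnitaryWeightEquiv a b Wa Wb) := by
  have hT' : ∀ x ∈ weightSupport a b, Tᴴ * Wb x = Wa x * Tᴴ := by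
    intro x hx
    have h := congrArg Matrix.conjTranspose (hT x hx)
    rw [conjTranspose_mul, conjTranspose_mul, (hWb.2.1 x hx).isHermitian.eq,
      (hWa.2.1 x hx).isHermitian.eq] at h
    exact h
  have hcommA : ∀ x ∈ weightSupport a b, (Tᴴ * T) * Wa x = Wa x * (Tᴴ * T) := by
    intro x hx
    calc (Tᴴ * T) * Wa x = Tᴴ * (T * Wa x) := by rw [Matrix.mul_assoc]
      _ = Tᴴ * (Wb x * T) := by rw [hT x hx]
      _ = (Tᴴ * Wb x) * T := by rw [Matrix.mul_assoc]
      _ = (Wa x * Tᴴ) * T := by rw [hT' x hx]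
      _ = Wa x * (Tᴴ * T) := by rw [Matrix.mul_assoc]
  have hcommB : ∀ x ∈ weightSupport a b, (T * Tᴴ) * Wb x = Wb x * (T * Tᴴ) := by
    intro x hx
    calc (T * Tᴴ) * Wb x = T * (Tᴴ * Wb x) := by rw [Matrix.mul_assoc]
      _ = T * (Wa x * Tᴴ) := by rw [hT' x hx]
      _ = (T * Wa x) * Tᴴ := by rw [Matrix.mul_assoc]
      _ = (Wb x * T) * Tᴴ := by rw [hT x hx]
      _ = Wb x * (T * Tᴴ) := by rw [Matrix.mul_assoc]
  obtain ⟨lam, hlam⟩ := commutant_scalar hWa hira (Matrix.isHermitian_conjTranspose_mul_self T) hcommA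
  obtain ⟨mu, hmu⟩ := commutant_scalar hWb hirb (Matrix.isHermitian_mul_conjTranspose_self T) hcommB
  have hTT : (Tᴴ * T).PosSemidef := Matrix.posSemidef_conjTranspose_mul_self T
  have hlam0 : 0 ≤ lam := by
    have h1 : (0 : ℂ) ≤ (Tᴴ * T) ⟨0, hN⟩ ⟨0, hN⟩ := by
      have := hTT.dotProduct_mulVec_nonneg (fun i => if i = ⟨0, hN⟩ then 1 else 0)
      simpa [dotProduct, mulVec, Finset.sum_ite_eq, Finset.sum_ite_eq'] using this
    rw [hlam] at h1
    simp only [Matrix.smul_apply, Matrix.one_apply_eq, smul_eq_mul, mul_one] at h1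
    exact_mod_cast Complex.zero_le_real.mp h1
  have hNne : (N : ℂ) ≠ 0 := Nat.cast_ne_zero.mpr hN.ne'
  have hMne : (M : ℂ) ≠ 0 := Nat.cast_ne_zero.mpr hM.ne'
  have htr : (lam : ℂ) * N = (mu : ℂ) * M := by
    have h := Matrix.trace_mul_comm Tᴴ T
    rw [hlam, hmu] at h
    rw [Matrix.trace_smul, Matrix.trace_smul, Matrix.trace_one, Matrix.trace_one] at h
    simpa [smul_eq_mul, Fintype.card_fin] using h
  have hTTH : T * Tᴴ = (lam : ℂ) • 1 := by
    by_cases h0 : lam = 0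
    · have hmu0 : (mu : ℂ) = 0 := by
        have : (mu : ℂ) * M = 0 := by rw [← htr, h0]; simp
        rcases mul_eq_zero.mp this with h | h
        · exact h
        · exact absurd h hMne
      rw [hmu, hmu0, h0]
      simp
    · have hmune : (mu : ℂ) ≠ 0 := by
        intro h
        apply h0
        have h' : (lam : ℂ) * N = 0 := by rw [htr, h]; simp
        rcases mul_eq_zero.mp h' with h'' | h''
        · exact_mod_cast h''
        · exact absurd h'' hNne
      have hsq : (T * Tᴴ) * (T * Tᴴ) = (lam : ℂ) • (T * Tᴴ) := by
        calc (T * Tᴴ) * (T * Tᴴ) = T * ((Tᴴ * T) * Tᴴ) := by simp only [Matrix.mul_assoc]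
          _ = T * (((lam : ℂ) • (1 : Matrix (Fin N) (Fin N) ℂ)) * Tᴴ) := by rw [hlam]
          _ = (lam : ℂ) • (T * Tᴴ) := by
              rw [Matrix.smul_mul, Matrix.one_mul, Matrix.mul_smul]
      rw [hmu] at hsq
      have hsq' : ((mu : ℂ) * mu) • (1 : Matrix (Fin M) (Fin M) ℂ)
          = ((lam : ℂ) * mu) • 1 := by
        calc ((mu : ℂ) * mu) • (1 : Matrix (Fin M) (Fin M) ℂ)
            = ((mu : ℂ) • 1) * ((mu : ℂ) • 1) := by
              rw [Matrix.smul_mul, Matrix.mul_smul, smul_smul, Matrix.mul_one]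
          _ = (lam : ℂ) • ((mu : ℂ) • 1) := hsq
          _ = ((lam : ℂ) * mu) • 1 := by rw [smul_smul]
      have hent : (mu : ℂ) * mu = (lam : ℂ) * mu := by
        have h := congrFun (congrFun hsq' ⟨0, hM⟩) ⟨0, hM⟩
        simpa using h
      have hmueq : (mu : ℂ) = (lam : ℂ) := mul_right_cancel₀ hmune hent
      rw [hmu, hmueq]
  refine ⟨lam, hlam0, hlam, hTTH, ?_⟩
  intro h0
  have hlampos : 0 < lam := lt_of_le_of_ne hlam0 (Ne.symm h0)
  set r : ℝ := Real.sqrt lam with hrdef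
  have hrpos : 0 < r := Real.sqrt_pos.mpr hlampos
  have hr2 : r * r = lam := Real.mul_self_sqrt hlampos.le
  set Mu : Matrix (Fin M) (Fin N) ℂ := ((r : ℂ))⁻¹ • T with hMudef
  have hMuH : Muᴴ = ((r : ℂ))⁻¹ • Tᴴ := by
    rw [hMudef, Matrix.conjTranspose_smul]
    congr 1
    rw [← Complex.ofReal_inv]
    exact Complex.conj_ofReal _
  have hscal : ((r : ℂ))⁻¹ * ((r : ℂ))⁻¹ * (lam : ℂ) = 1 := by
    have hrne : (r : ℂ) ≠ 0 := Complex.ofReal_ne_zero.mpr (ne_of_gt hrpos)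
    rw [← hr2]
    push_cast
    field_simp
  have hMu1 : Mu * Muᴴ = 1 := by
    rw [hMuH, hMudef, Matrix.smul_mul, Matrix.mul_smul, hTTH, smul_smul, smul_smul, hscal, one_smul]
  have hMu2 : Muᴴ * Mu = 1 := by
    rw [hMuH, hMudef, Matrix.smul_mul, Matrix.mul_smul, hlam, smul_smul, smul_smul, hscal, one_smul]
  refine ⟨Mu, hMu1, hMu2, ?_⟩
  intro x hx
  have hint : Wb x * Mu = Mu * Wa x := by
    rw [hMudef, Matrix.mul_smul, Matrix.smul_mul, hT x hx]
  calc Wb x = Wb x * (Mu * Muᴴ) := by rw [hMu1, Matrix.mul_one]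
    _ = (Wb x * Mu) * Muᴴ := by rw [Matrix.mul_assoc]
    _ = (Mu * Wa x) * Muᴴ := by rw [hint]
    _ = Mu * Wa x * Muᴴ := rfl

lemma hall_aux {J J' : ℕ} (lam : Fin J' → Fin J → ℝ) (h0 : ∀ k i, 0 ≤ lam k i)
    (hcol : ∀ i, ∑ k, lam k i = 1) (hrow : ∀ k, ∑ i, lam k i = 1) :
    ∃ f : Fin J → Fin J', Function.Injective f ∧ ∀ i, lam (f i) i ≠ 0 := by
  classical
  set t : Fin J → Finset (Fin J') := fun i => Finset.univ.filter (fun k => lam k i ≠ 0) with htdef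
  have hhall : ∀ s : Finset (Fin J), s.card ≤ (s.biUnion t).card := by
    intro s
    have hreal : (s.card : ℝ) ≤ ((s.biUnion t).card : ℝ) := by
      calc (s.card : ℝ) = ∑ _i ∈ s, (1 : ℝ) := by simp
        _ = ∑ i ∈ s, ∑ k, lam k i := Finset.sum_congr rfl (fun i _ => (hcol i).symm)
        _ = ∑ i ∈ s, ∑ k ∈ s.biUnion t, lam k i := by
            refine Finset.sum_congr rfl fun i hi => ?_
            refine (Finset.sum_subset (Finset.subset_univ _) ?_).symm
            intro k _ hk
            by_contra hne
            exact hk (Finset.mem_biUnion.mpr ⟨i, hi, by simp [htdef, hne]⟩)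
        _ = ∑ k ∈ s.biUnion t, ∑ i ∈ s, lam k i := Finset.sum_comm
        _ ≤ ∑ _k ∈ s.biUnion t, (1 : ℝ) := by
            refine Finset.sum_le_sum fun k _ => ?_
            rw [← hrow k]
            exact Finset.sum_le_sum_of_subset_of_nonneg (Finset.subset_univ s)
              (fun i _ _ => h0 k i)
        _ = ((s.biUnion t).card : ℝ) := by simp
    exact_mod_cast hreal
  obtain ⟨f, hfinj, hf⟩ := (Finset.all_card_le_biUnion_card_iff_exists_injective t).mp hhall
  refine ⟨f, hfinj, fun i => ?_⟩
  have := hf i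
  simpa [htdef] using this

end Helpers

/-- If two direct sums of irreducible matrix weights are unitarily equivalent,
then they have the same number of blocks and, up to a permutation, the blocks are unitarily
equivalent. -/
theorem stmt_8 (a b : EReal) (j j' : ℕ) (n : Fin j → ℕ) (n' : Fin j' → ℕ)
    (hn : ∀ i, 0 < n i) (hn' : ∀ k, 0 < n' k)
    (W₁ : (i : Fin j) → ℝ → Matrix (Fin (n i)) (Fin (n i)) ℂ)
    (W₂ : (k : Fin j') → ℝ → Matrix (Fin (n' k)) (Fin (n' k)) ℂ)
    (hW₁ : ∀ i, IsMatrixWeight a b (W₁ i)) (hW₂ : ∀ k, IsMatrixWeight a b (W₂ k))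
    (hirr₁ : ∀ i, ¬ Reduces a b (W₁ i)) (hirr₂ : ∀ k, ¬ Reduces a b (W₂ k))
    (hequiv : UnitaryWeightEquiv a b
        (fun x => Matrix.blockDiagonal' (fun i => W₁ i x))
        (fun x => Matrix.blockDiagonal' (fun k => W₂ k x))) :
    j = j' ∧ ∃ σ : Fin j ≃ Fin j', ∀ i, UnitaryWeightEquiv a b (W₁ i) (W₂ (σ i)) := by
  classical
  obtain ⟨U, hU1, hU2, hUW⟩ := hequiv
  have hint : ∀ x ∈ weightSupport a b,
      Matrix.blockDiagonal' (fun k => W₂ k x) * U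
        = U * Matrix.blockDiagonal' (fun i => W₁ i x) := by
    intro x hx
    calc Matrix.blockDiagonal' (fun k => W₂ k x) * U
        = (U * Matrix.blockDiagonal' (fun i => W₁ i x) * Uᴴ) * U := by rw [← hUW x hx]
      _ = U * Matrix.blockDiagonal' (fun i => W₁ i x) * (Uᴴ * U) := by
          rw [Matrix.mul_assoc]
      _ = U * Matrix.blockDiagonal' (fun i => W₁ i x) := by rw [hU2, Matrix.mul_one]
  set T : (k : Fin j') → (i : Fin j) → Matrix (Fin (n' k)) (Fin (n i)) ℂ :=
    fun k i => Matrix.of (fun p q => U ⟨k, p⟩ ⟨i, q⟩) with hTdef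
  have hblock : ∀ (k : Fin j') (i : Fin j), ∀ x ∈ weightSupport a b,
      W₂ k x * T k i = T k i * W₁ i x := by
    intro k i x hx
    ext p q
    have h := congrFun (congrFun (hint x hx) ⟨k, p⟩) ⟨i, q⟩
    have hL : (Matrix.blockDiagonal' (fun k => W₂ k x) * U) ⟨k, p⟩ ⟨i, q⟩
        = (W₂ k x * T k i) p q := by
      rw [Matrix.mul_apply, Matrix.mul_apply, ← Finset.univ_sigma_univ, Finset.sum_sigma]
      rw [Finset.sum_eq_single k]
      · refine Finset.sum_congr rfl fun p' _ => ?_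
        rw [Matrix.blockDiagonal'_apply_eq]
        rfl
      · intro k' _ hne
        refine Finset.sum_eq_zero fun p' _ => ?_
        rw [Matrix.blockDiagonal'_apply_ne _ _ _ (Ne.symm hne)]
        exact zero_mul _
      · intro h; exact absurd (Finset.mem_univ k) h
    have hR : (U * Matrix.blockDiagonal' (fun i => W₁ i x)) ⟨k, p⟩ ⟨i, q⟩
        = (T k i * W₁ i x) p q := by
      rw [Matrix.mul_apply, Matrix.mul_apply, ← Finset.univ_sigma_univ, Finset.sum_sigma]
      rw [Finset.sum_eq_single i]
      · refine Finset.sum_congr rfl fun q' _ => ?_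
        rw [Matrix.blockDiagonal'_apply_eq]
        rfl
      · intro i' _ hne
        refine Finset.sum_eq_zero fun q' _ => ?_
        rw [Matrix.blockDiagonal'_apply_ne _ _ _ hne]
        exact mul_zero _
      · intro h; exact absurd (Finset.mem_univ i) h
    rw [← hL, ← hR]
    exact h
  have hschur : ∀ (k : Fin j') (i : Fin j), ∃ lam : ℝ, 0 ≤ lam ∧
      (T k i)ᴴ * T k i = (lam : ℂ) • 1 ∧ T k i * (T k i)ᴴ = (lam : ℂ) • 1 ∧
      (lam ≠ 0 → UnitaryWeightEquiv a b (W₁ i) (W₂ k)) :=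
    fun k i => schur_weights (hn i) (hn' k) (hW₁ i) (hW₂ k) (hirr₁ i) (hirr₂ k)
      (fun x hx => hblock k i x hx)
  choose lam hlam0 hlamTT hlamTTH hlamU using hschur
  have hcol : ∀ i, ∑ k, lam k i = 1 := by
    intro i
    have hC : ((∑ k, lam k i : ℝ) : ℂ) = 1 := by
      have h := congrFun (congrFun hU2 ⟨i, ⟨0, hn i⟩⟩) ⟨i, ⟨0, hn i⟩⟩
      rw [Matrix.one_apply_eq] at h
      rw [Matrix.mul_apply, ← Finset.univ_sigma_univ, Finset.sum_sigma] at h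
      push_cast
      rw [← h]
      refine Finset.sum_congr rfl fun k _ => ?_
      have h2 : ((T k i)ᴴ * T k i) ⟨0, hn i⟩ ⟨0, hn i⟩ = (lam k i : ℂ) := by
        rw [hlamTT k i]
        simp
      rw [← h2, Matrix.mul_apply]
      rfl
    exact_mod_cast hC
  have hrow : ∀ k, ∑ i, lam k i = 1 := by
    intro k
    have hC : ((∑ i, lam k i : ℝ) : ℂ) = 1 := by
      have h := congrFun (congrFun hU1 ⟨k, ⟨0, hn' k⟩⟩) ⟨k, ⟨0, hn' k⟩⟩
      rw [Matrix.one_apply_eq] at h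
      rw [Matrix.mul_apply, ← Finset.univ_sigma_univ, Finset.sum_sigma] at h
      push_cast
      rw [← h]
      refine Finset.sum_congr rfl fun i _ => ?_
      have h2 : (T k i * (T k i)ᴴ) ⟨0, hn' k⟩ ⟨0, hn' k⟩ = (lam k i : ℂ) := by
        rw [hlamTTH k i]
        simp
      rw [← h2, Matrix.mul_apply]
      rfl
    exact_mod_cast hC
  obtain ⟨f, hfinj, hf⟩ := hall_aux lam hlam0 hcol hrow
  obtain ⟨g, hginj, _⟩ := hall_aux (fun i k => lam k i) (fun i k => hlam0 k i) hrow hcol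
  have hcard : j = j' := by
    have h1 : j ≤ j' := by simpa using Fintype.card_le_of_injective f hfinj
    have h2 : j' ≤ j := by simpa using Fintype.card_le_of_injective g hginj
    omega
  have hbij : Function.Bijective f :=
    (Fintype.bijective_iff_injective_and_card f).mpr ⟨hfinj, by simp [hcard]⟩
  exact ⟨hcard, Equiv.ofBijective f hbij, fun i => hlamU (f i) i (hf i)⟩
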